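/- (Dwork's Lemma, converse direction) Let p be a prime and ω = f(t) dt/t with f ∈ Z_p[[t]], Res_0 ω = f(0) ∈ Z. If (1/p)ω(t^p) − ω(t) = dh for some h ∈ Z_p[[t]], then ω = dlog q for some q ∈ Z_p((t))^*. -/

import Mathlib

open PowerSeries

/-- The derivation `δ = t d/dt` on formal power series. -/
noncomputable def seriesDelta {R : Type*} [CommRing R] (f : PowerSeries R) : PowerSeries R :=
  PowerSeries.mk fun m => (m : R) * PowerSeries.coeff m f

/-- Substitution `t ↦ t^p` on formal power series. -/
noncomputable def seriesSub {R : Type*} [CommRing R] (p : ℕ) (f : PowerSeries R) : PowerSeries R :=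
  PowerSeries.mk fun m => if p ∣ m then PowerSeries.coeff (m / p) f else 0

namespace DworkAux

variable {R : Type*} [CommRing R]

lemma coeff_delta (f : PowerSeries R) (m : ℕ) :
    PowerSeries.coeff m (seriesDelta f) = (m : R) * PowerSeries.coeff m f := by
  simp [seriesDelta]

lemma coeff_sub' (p : ℕ) (f : PowerSeries R) (m : ℕ) :
    PowerSeries.coeff m (seriesSub p f) =
      if p ∣ m then PowerSeries.coeff (m / p) f else 0 := by
  simp [seriesSub]

lemma delta_sub_series (a b : PowerSeries R) :
    seriesDelta (a - b) = seriesDelta a - seriesDelta b := by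
  ext m; simp [coeff_delta, mul_sub]

lemma delta_one : seriesDelta (1 : PowerSeries R) = 0 := by
  ext m
  simp only [coeff_delta, PowerSeries.coeff_one, map_zero]
  rcases eq_or_ne m 0 with h | h <;> simp [h]

lemma delta_C (c : R) : seriesDelta (PowerSeries.C c) = 0 := by
  ext m
  simp only [coeff_delta, PowerSeries.coeff_C, map_zero]
  rcases eq_or_ne m 0 with h | h <;> simp [h]

lemma constantCoeff_delta (f : PowerSeries R) :
    PowerSeries.constantCoeff (seriesDelta f) = 0 := by
  have := coeff_delta f 0
  simpa [PowerSeries.coeff_zero_eq_constantCoeff] using this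

lemma delta_mul (a b : PowerSeries R) :
    seriesDelta (a * b) = seriesDelta a * b + a * seriesDelta b := by
  ext m
  simp only [coeff_delta, map_add, PowerSeries.coeff_mul, Finset.mul_sum, ← Finset.sum_add_distrib]
  refine Finset.sum_congr rfl fun x hx => ?_
  have hx' : x.1 + x.2 = m := Finset.HasAntidiagonal.mem_antidiagonal.mp hx
  have : (m : R) = (x.1 : R) + (x.2 : R) := by exact_mod_cast congrArg (Nat.cast (R := R)) hx'.symm
  rw [this]; ring

lemma delta_C_mul (c : R) (x : PowerSeries R) :
    seriesDelta (PowerSeries.C c * x) = PowerSeries.C c * seriesDelta x := by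
  ext m; simp [coeff_delta, PowerSeries.coeff_C_mul]; ring

lemma delta_pow (x : PowerSeries R) (n : ℕ) :
    seriesDelta (x ^ (n + 1)) =
      PowerSeries.C ((n : R) + 1) * (x ^ n * seriesDelta x) := by
  induction n with
  | zero => simp [delta_mul]
  | succ n ih =>
      have h2 : x ^ (n + 1 + 1) = x ^ (n + 1) * x := by ring
      rw [h2, delta_mul, ih]
      have h3 : x ^ (n + 1) = x ^ n * x := by ring
      rw [h3]
      have hC : (PowerSeries.C (R := R)) ((n:R) + 1 + 1) = PowerSeries.C ((n:R)+1) + 1 := by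
        rw [map_add, map_one]
      push_cast
      rw [hC]
      ring

lemma delta_pow' (x : PowerSeries R) {n : ℕ} (hn : n ≠ 0) :
    seriesDelta (x ^ n) = PowerSeries.C ((n : R)) * (x ^ (n - 1) * seriesDelta x) := by
  obtain ⟨k, rfl⟩ : ∃ k, n = k + 1 := ⟨n - 1, by omega⟩
  rw [delta_pow]
  have h1 : (((k + 1 : ℕ)) : R) = (k : R) + 1 := by push_cast; ring
  have h2 : k + 1 - 1 = k := rfl
  rw [h2, h1]

lemma delta_sum {ι : Type*} (s : Finset ι) (F : ι → PowerSeries R) :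
    seriesDelta (∑ i ∈ s, F i) = ∑ i ∈ s, seriesDelta (F i) := by
  ext m
  rw [coeff_delta, map_sum, map_sum, Finset.mul_sum]
  exact Finset.sum_congr rfl fun i _ => (coeff_delta (F i) m).symm

end DworkAux

namespace DworkAux

variable {p : ℕ} [hp : Fact p.Prime]

lemma norm_sum_le {ι : Type*} (s : Finset ι) (g : ι → ℚ_[p]) {B : ℝ} (hB : 0 ≤ B)
    (h : ∀ i ∈ s, ‖g i‖ ≤ B) : ‖∑ i ∈ s, g i‖ ≤ B := by
  classical
  induction s using Finset.cons_induction with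
  | empty => simpa using hB
  | cons a s ha ih =>
      rw [Finset.sum_cons]
      refine le_trans (Padic.nonarchimedean _ _) ?_
      exact max_le (h a (Finset.mem_cons_self a s)) (ih fun i hi => h i (Finset.mem_cons.mpr (Or.inr hi)))

lemma norm_coeff_mul_le (a b : PowerSeries ℚ_[p]) {A B : ℝ} (hA : 0 ≤ A) (hB : 0 ≤ B)
    (ha : ∀ j, ‖PowerSeries.coeff j a‖ ≤ A) (hb : ∀ j, ‖PowerSeries.coeff j b‖ ≤ B)
    (m : ℕ) : ‖PowerSeries.coeff m (a * b)‖ ≤ A * B := by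
  rw [PowerSeries.coeff_mul]
  refine norm_sum_le _ _ (mul_nonneg hA hB) fun x _ => ?_
  rw [norm_mul]
  exact mul_le_mul (ha x.1) (hb x.2) (norm_nonneg _) hA

lemma norm_coeff_pow_le (a : PowerSeries ℚ_[p])
    (ha : ∀ j, ‖PowerSeries.coeff j a‖ ≤ 1) (n : ℕ) :
    ∀ m, ‖PowerSeries.coeff m (a ^ n)‖ ≤ 1 := by
  induction n with
  | zero => intro m; simp [PowerSeries.coeff_one]; split <;> simp
  | succ n ih =>
      intro m
      rw [pow_succ]
      simpa using norm_coeff_mul_le (a ^ n) a zero_le_one zero_le_one ih ha m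

/-- Uniqueness for the ODE `δ y = G y` over `ℚ_p`. -/
lemma ode_unique (G y z : PowerSeries ℚ_[p])
    (hG : PowerSeries.constantCoeff G = 0)
    (hy : seriesDelta y = G * y) (hz : seriesDelta z = G * z)
    (h0 : PowerSeries.coeff 0 y = PowerSeries.coeff 0 z) : y = z := by
  set d := y - z with hd
  have hdelta : seriesDelta d = G * d := by
    rw [hd, delta_sub_series, hy, hz, mul_sub]
  have key : ∀ m, PowerSeries.coeff m d = 0 := by
    intro m
    induction m using Nat.strong_induction_on with
    | _ m ih =>
      rcases Nat.eq_zero_or_pos m with rfl | hm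
      · rw [hd, map_sub, h0, sub_self]
      · have h1 : (m : ℚ_[p]) * PowerSeries.coeff m d = 0 := by
          rw [← coeff_delta, hdelta, PowerSeries.coeff_mul]
          refine Finset.sum_eq_zero fun x hx => ?_
          have hx' : x.1 + x.2 = m := Finset.HasAntidiagonal.mem_antidiagonal.mp hx
          rcases Nat.eq_zero_or_pos x.1 with h1 | h1
          · have : x.1 = 0 := h1
            rw [this]
            simp [PowerSeries.coeff_zero_eq_constantCoeff, hG]
          · have : x.2 < m := by omega
            rw [ih x.2 this, mul_zero]
        have hm' : (m : ℚ_[p]) ≠ 0 := by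
          exact_mod_cast Nat.cast_ne_zero.mpr (by omega)
        exact (mul_eq_zero.mp h1).resolve_left hm'
  ext m
  have h2 := key m
  rw [hd, map_sub, sub_eq_zero] at h2
  exact h2

lemma sub_mul (a b : PowerSeries ℚ_[p]) :
    seriesSub p (a * b) = seriesSub p a * seriesSub p b := by
  classical
  have hp0 : 0 < p := hp.out.pos
  ext m
  rw [coeff_sub']
  conv_rhs => rw [PowerSeries.coeff_mul]
  simp only [coeff_sub']
  by_cases hm : p ∣ m
  · rw [if_pos hm, PowerSeries.coeff_mul]
    symm
    obtain ⟨mm, hmm⟩ := hm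
    have hmdiv : m / p = mm := by rw [hmm, Nat.mul_div_cancel_left _ hp0]
    calc (∑ x ∈ Finset.HasAntidiagonal.antidiagonal m,
            (if p ∣ x.1 then PowerSeries.coeff (x.1 / p) a else 0) *
            (if p ∣ x.2 then PowerSeries.coeff (x.2 / p) b else 0))
        = ∑ x ∈ (Finset.HasAntidiagonal.antidiagonal m).filter (fun x => p ∣ x.1 ∧ p ∣ x.2),
            (if p ∣ x.1 then PowerSeries.coeff (x.1 / p) a else 0) *
            (if p ∣ x.2 then PowerSeries.coeff (x.2 / p) b else 0) := by
          refine (Finset.sum_filter_of_ne ?_).symm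
          intro x hx hne
          constructor
          · by_contra h1; exact hne (by rw [if_neg h1, zero_mul])
          · by_contra h1; exact hne (by rw [if_neg h1, mul_zero])
      _ = ∑ y ∈ Finset.HasAntidiagonal.antidiagonal (m / p),
            PowerSeries.coeff y.1 a * PowerSeries.coeff y.2 b := by
          refine Finset.sum_nbij' (fun x : ℕ × ℕ => (x.1 / p, x.2 / p))
            (fun y : ℕ × ℕ => (p * y.1, p * y.2)) ?_ ?_ ?_ ?_ ?_
          · intro x hx
            simp only [Finset.mem_filter, Finset.HasAntidiagonal.mem_antidiagonal] at hx
            obtain ⟨hsum, ⟨a1, e1⟩, ⟨a2, e2⟩⟩ := hx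
            rw [Finset.HasAntidiagonal.mem_antidiagonal]
            dsimp only
            rw [e1, e2, Nat.mul_div_cancel_left _ hp0,
              Nat.mul_div_cancel_left _ hp0, hmdiv]
            have h5 : p * a1 + p * a2 = p * mm := by rw [← e1, ← e2, hsum, hmm]
            exact Nat.eq_of_mul_eq_mul_left hp0 (by rw [Nat.mul_add]; exact h5)
          · intro y hy
            rw [Finset.HasAntidiagonal.mem_antidiagonal, hmdiv] at hy
            simp only [Finset.mem_filter, Finset.HasAntidiagonal.mem_antidiagonal]
            refine ⟨?_, Dvd.intro _ rfl, Dvd.intro _ rfl⟩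
            rw [hmm, ← Nat.mul_add, hy]
          · intro x hx
            simp only [Finset.mem_filter, Finset.HasAntidiagonal.mem_antidiagonal] at hx
            obtain ⟨hsum, ⟨a1, e1⟩, ⟨a2, e2⟩⟩ := hx
            have : x = (p * a1, p * a2) := by
              rw [← e1, ← e2]
            rw [this]
            simp [Nat.mul_div_cancel_left _ hp0]
          · intro y _
            simp [Nat.mul_div_cancel_left _ hp0]
          · intro x hx
            simp only [Finset.mem_filter, Finset.HasAntidiagonal.mem_antidiagonal] at hx
            obtain ⟨hsum, h1, h2⟩ := hx
            rw [if_pos h1, if_pos h2]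
  · rw [if_neg hm]
    symm
    refine Finset.sum_eq_zero fun x hx => ?_
    have hx' : x.1 + x.2 = m := Finset.HasAntidiagonal.mem_antidiagonal.mp hx
    by_cases h1 : p ∣ x.1
    · have h2 : ¬ p ∣ x.2 := fun h2 => hm (hx' ▸ Nat.dvd_add h1 h2)
      rw [if_neg h2, mul_zero]
    · rw [if_neg h1, zero_mul]

lemma delta_seriesSub (u : PowerSeries ℚ_[p]) :
    seriesDelta (seriesSub p u) =
      PowerSeries.C (p : ℚ_[p]) * seriesSub p (seriesDelta u) := by
  ext m
  rw [coeff_delta, PowerSeries.coeff_C_mul, coeff_sub', coeff_sub']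
  by_cases hm : p ∣ m
  · rw [if_pos hm, if_pos hm, coeff_delta]
    obtain ⟨k, rfl⟩ := hm
    rw [Nat.mul_div_cancel_left _ hp.out.pos]
    push_cast
    ring
  · rw [if_neg hm, if_neg hm, mul_zero, mul_zero]

end DworkAux

namespace DworkAux

variable {p : ℕ} [hp : Fact p.Prime]

lemma padicValNat_factorial_le (n : ℕ) (hn : 1 ≤ n) :
    padicValNat p (n.factorial) ≤ n - 1 := by
  set v := padicValNat p (n.factorial) with hv
  have h2 : (p - 1) * v = n - (p.digits n).sum := sub_one_mul_padicValNat_factorial n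
  have hds : 1 ≤ (p.digits n).sum := by
    have hne : p.digits n ≠ [] := Nat.digits_ne_nil_iff_ne_zero.mpr (by omega)
    have hlast := Nat.getLast_digit_ne_zero p (m := n) (by omega)
    have hmem : (p.digits n).getLast hne ∈ p.digits n := List.getLast_mem hne
    calc 1 ≤ (p.digits n).getLast hne := by omega
      _ ≤ (p.digits n).sum := List.single_le_sum (fun x _ => Nat.zero_le x) _ hmem
  have h1 : v ≤ (p - 1) * v := Nat.le_mul_of_pos_left v (by have := hp.out.two_le; omega)
  omega

lemma norm_cExp_le (n : ℕ) (hn : 1 ≤ n) :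
    ‖(p : ℚ_[p]) ^ n * ((n.factorial : ℚ_[p]))⁻¹‖ ≤ (p : ℝ)⁻¹ := by
  have hp1 : (1 : ℝ) < p := by exact_mod_cast hp.out.one_lt
  have hp0R : (0 : ℝ) < p := by linarith
  set v := padicValNat p (n.factorial) with hv
  have hvle : v ≤ n - 1 := padicValNat_factorial_le n hn
  -- factor n! = p^v * m' with ¬ p ∣ m'
  have hfne : n.factorial ≠ 0 := Nat.factorial_ne_zero n
  have hfact : (n.factorial).factorization p = v := by
    rw [Nat.factorization_def _ hp.out]
  have hsplit : p ^ v * (n.factorial / p ^ v) = n.factorial := by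
    rw [← hfact]; exact Nat.ordProj_mul_ordCompl_eq_self _ _
  set m' := n.factorial / p ^ v with hm'
  have hndvd : ¬ p ∣ m' := by
    rw [hm', ← hfact]; exact Nat.not_dvd_ordCompl hp.out hfne
  have hm'norm : ‖(m' : ℚ_[p])‖ = 1 := by
    refine le_antisymm (by exact_mod_cast Padic.norm_int_le_one (m' : ℤ)) ?_
    by_contra hlt
    push_neg at hlt
    have : ‖((m' : ℤ) : ℚ_[p])‖ < 1 := by push_cast; push_cast at hlt; exact hlt
    rw [Padic.norm_intCast_lt_one_iff] at this
    exact hndvd (by exact_mod_cast this)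
  have hfnorm : ‖(n.factorial : ℚ_[p])‖ = ((p : ℝ))⁻¹ ^ v := by
    have : ((n.factorial : ℚ_[p])) = (p : ℚ_[p]) ^ v * (m' : ℚ_[p]) := by
      rw [← hsplit]; push_cast; ring
    rw [this, norm_mul, norm_pow, Padic.norm_p, hm'norm, mul_one]
  rw [norm_mul, norm_pow, Padic.norm_p, norm_inv, hfnorm]
  rw [inv_pow, inv_pow, inv_inv]
  have key : (p : ℝ) ^ v * (p : ℝ) ≤ (p : ℝ) ^ n := by
      have : (p:ℝ) ^ v * (p:ℝ) = (p:ℝ) ^ (v + 1) := by ring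
      rw [this]
      exact pow_le_pow_right₀ (le_of_lt hp1) (by omega)
  calc ((p:ℝ)^n)⁻¹ * (p:ℝ)^v ≤ ((p:ℝ)^n)⁻¹ * ((p:ℝ)^n * (p:ℝ)⁻¹) := by
          rw [mul_comm ((p:ℝ)^n) _]
          refine mul_le_mul_of_nonneg_left ?_ (by positivity)
          rw [inv_mul_eq_div, le_div_iff₀ hp0R]
          exact key
      _ = (p:ℝ)⁻¹ := by field_simp

end DworkAux

namespace DworkAux

variable {p : ℕ} [hp : Fact p.Prime]

lemma coeff_pow_eq_zero {H : PowerSeries ℚ_[p]} (hH : PowerSeries.constantCoeff H = 0)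
    {m n : ℕ} (h : m < n) : PowerSeries.coeff m (H ^ n) = 0 := by
  have hdvd : (X : PowerSeries ℚ_[p]) ^ n ∣ H ^ n :=
    pow_dvd_pow_of_dvd (PowerSeries.X_dvd_iff.mpr hH) n
  exact PowerSeries.X_pow_dvd_iff.mp hdvd m h

noncomputable def cExp (p : ℕ) (n : ℕ) [Fact p.Prime] : ℚ_[p] :=
  (p : ℚ_[p]) ^ n * ((n.factorial : ℚ_[p]))⁻¹

lemma cExp_zero : cExp p 0 = 1 := by simp [cExp]

lemma cExp_succ (n : ℕ) : ((n : ℚ_[p]) + 1) * cExp p (n + 1) = (p : ℚ_[p]) * cExp p n := by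
  have h1 : ((n.factorial : ℚ_[p])) ≠ 0 := by
    exact_mod_cast Nat.cast_ne_zero.mpr (Nat.factorial_ne_zero n)
  have h2 : (((n + 1).factorial : ℚ_[p])) ≠ 0 := by
    exact_mod_cast Nat.cast_ne_zero.mpr (Nat.factorial_ne_zero (n + 1))
  have h3 : (((n + 1).factorial : ℚ_[p])) = ((n : ℚ_[p]) + 1) * (n.factorial : ℚ_[p]) := by
    rw [Nat.factorial_succ]; push_cast; ring
  have h4 : ((n : ℚ_[p]) + 1) ≠ 0 := Nat.cast_add_one_ne_zero n
  rw [cExp, cExp, h3, mul_inv, pow_succ]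
  field_simp

/-- `H = hh - hh(0)`. -/
noncomputable def Hser (hh : PowerSeries ℚ_[p]) : PowerSeries ℚ_[p] :=
  hh - PowerSeries.C (PowerSeries.constantCoeff hh)

lemma constantCoeff_Hser (hh : PowerSeries ℚ_[p]) :
    PowerSeries.constantCoeff (Hser hh) = 0 := by
  simp [Hser]

lemma delta_Hser (hh : PowerSeries ℚ_[p]) : seriesDelta (Hser hh) = seriesDelta hh := by
  rw [Hser, delta_sub_series, delta_C, sub_zero]

lemma norm_coeff_Hser (hh : PowerSeries ℚ_[p]) (hhint : ∀ m, ‖PowerSeries.coeff m hh‖ ≤ 1)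
    (j : ℕ) : ‖PowerSeries.coeff j (Hser hh)‖ ≤ 1 := by
  rw [Hser, map_sub, PowerSeries.coeff_C]
  rcases eq_or_ne j 0 with rfl | hj
  · simp [PowerSeries.coeff_zero_eq_constantCoeff]
  · rw [if_neg hj, sub_zero]; exact hhint j

/-- `E = exp(p (hh - hh(0)))`, defined coefficientwise. -/
noncomputable def Eser (hh : PowerSeries ℚ_[p]) : PowerSeries ℚ_[p] :=
  PowerSeries.mk fun m =>
    ∑ n ∈ Finset.range (m + 1), cExp p n * PowerSeries.coeff m ((Hser hh) ^ n)

noncomputable def Sser (hh : PowerSeries ℚ_[p]) (N : ℕ) : PowerSeries ℚ_[p] :=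
  ∑ n ∈ Finset.range N, PowerSeries.C (cExp p n) * (Hser hh) ^ n

lemma coeff_Sser_eq (hh : PowerSeries ℚ_[p]) {m N : ℕ} (h : m < N) :
    PowerSeries.coeff m (Sser hh N) = PowerSeries.coeff m (Eser hh) := by
  rw [Sser, map_sum, Eser, PowerSeries.coeff_mk]
  simp only [PowerSeries.coeff_C_mul]
  rw [Finset.sum_subset (Finset.range_subset_range.mpr (by omega : m + 1 ≤ N))]
  intro n hn hn'
  rw [Finset.mem_range] at hn
  rw [Finset.mem_range, not_lt] at hn'
  rw [coeff_pow_eq_zero (constantCoeff_Hser hh) (by omega), mul_zero]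

lemma coeff_Eser_zero (hh : PowerSeries ℚ_[p]) :
    PowerSeries.coeff 0 (Eser hh) = 1 := by
  rw [Eser, PowerSeries.coeff_mk]
  simp [cExp_zero]

lemma delta_Sser (hh : PowerSeries ℚ_[p]) (N : ℕ) :
    seriesDelta (Sser hh (N + 1)) =
      PowerSeries.C (p : ℚ_[p]) * seriesDelta hh * Sser hh N := by
  rw [Sser, delta_sum, Finset.sum_range_succ']
  have h0 : seriesDelta (PowerSeries.C (cExp p 0) * (Hser hh) ^ 0) = 0 := by
    rw [pow_zero, mul_one, delta_C]
  rw [h0, add_zero]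
  rw [Sser, Finset.mul_sum]
  refine Finset.sum_congr rfl fun n _ => ?_
  rw [delta_C_mul, delta_pow, delta_Hser]
  have := cExp_succ (p := p) n
  calc PowerSeries.C (cExp p (n+1)) *
        (PowerSeries.C ((n : ℚ_[p]) + 1) * ((Hser hh) ^ n * seriesDelta hh))
      = PowerSeries.C (((n : ℚ_[p]) + 1) * cExp p (n+1)) *
          ((Hser hh) ^ n * seriesDelta hh) := by rw [map_mul]; ring
    _ = PowerSeries.C ((p : ℚ_[p]) * cExp p n) * ((Hser hh) ^ n * seriesDelta hh) := by
          rw [this]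
    _ = PowerSeries.C (p : ℚ_[p]) * seriesDelta hh *
          (PowerSeries.C (cExp p n) * (Hser hh) ^ n) := by rw [map_mul]; ring

lemma delta_Eser (hh : PowerSeries ℚ_[p]) :
    seriesDelta (Eser hh) =
      PowerSeries.C (p : ℚ_[p]) * seriesDelta hh * Eser hh := by
  ext m
  rw [coeff_delta]
  have h1 : PowerSeries.coeff m (Eser hh) =
      PowerSeries.coeff m (Sser hh (m + 2)) := (coeff_Sser_eq hh (by omega)).symm
  rw [h1, ← coeff_delta, delta_Sser]
  rw [PowerSeries.coeff_mul, PowerSeries.coeff_mul]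
  refine Finset.sum_congr rfl fun x hx => ?_
  have hx' : x.1 + x.2 = m := Finset.HasAntidiagonal.mem_antidiagonal.mp hx
  rw [coeff_Sser_eq hh (by omega : x.2 < m + 1)]

lemma norm_coeff_Eser_le_one (hh : PowerSeries ℚ_[p])
    (hhint : ∀ m, ‖PowerSeries.coeff m hh‖ ≤ 1) (m : ℕ) :
    ‖PowerSeries.coeff m (Eser hh)‖ ≤ 1 := by
  rw [Eser, PowerSeries.coeff_mk]
  refine norm_sum_le _ _ zero_le_one fun n _ => ?_
  rw [norm_mul]
  have h1 : ‖PowerSeries.coeff m ((Hser hh) ^ n)‖ ≤ 1 :=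
    norm_coeff_pow_le _ (norm_coeff_Hser hh hhint) n m
  have h2 : ‖cExp p n‖ ≤ 1 := by
    rcases Nat.eq_zero_or_pos n with rfl | hn
    · simp [cExp_zero]
    · refine le_trans (norm_cExp_le n hn) ?_
      rw [inv_le_one_iff₀]
      right
      exact_mod_cast hp.out.one_le
  calc ‖cExp p n‖ * ‖_‖ ≤ 1 * 1 := mul_le_mul h2 h1 (norm_nonneg _) zero_le_one
    _ = 1 := by ring

lemma norm_coeff_Eser_sub_one (hh : PowerSeries ℚ_[p])
    (hhint : ∀ m, ‖PowerSeries.coeff m hh‖ ≤ 1) (j : ℕ) :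
    ‖PowerSeries.coeff j (Eser hh - 1)‖ ≤ (p : ℝ)⁻¹ := by
  have hpinv : (0:ℝ) ≤ (p : ℝ)⁻¹ := by positivity
  rw [map_sub, PowerSeries.coeff_one]
  rcases eq_or_ne j 0 with rfl | hj
  · rw [if_pos rfl, coeff_Eser_zero, sub_self, norm_zero]; exact hpinv
  · rw [if_neg hj, sub_zero, Eser, PowerSeries.coeff_mk]
    refine norm_sum_le _ _ hpinv fun n hn => ?_
    rcases Nat.eq_zero_or_pos n with rfl | hn1
    · rw [pow_zero, PowerSeries.coeff_one, if_neg hj, mul_zero, norm_zero]; exact hpinv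
    · rw [norm_mul]
      have h1 : ‖PowerSeries.coeff j ((Hser hh) ^ n)‖ ≤ 1 :=
        norm_coeff_pow_le _ (norm_coeff_Hser hh hhint) n j
      calc ‖cExp p n‖ * ‖_‖ ≤ (p:ℝ)⁻¹ * 1 :=
            mul_le_mul (norm_cExp_le n hn1) h1 (norm_nonneg _) hpinv
        _ = (p:ℝ)⁻¹ := by ring

end DworkAux

namespace DworkAux

variable {p : ℕ} [hp : Fact p.Prime]

lemma zmod_frobenius_coeff (W : PowerSeries (ZMod p)) (m : ℕ) (hm : p ∣ m) :
    PowerSeries.coeff m (W ^ p) = PowerSeries.coeff (m / p) W := by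
  classical
  set T := PowerSeries.trunc (m + 1) W with hT
  have hTc : ∀ j, j ≤ m → PowerSeries.coeff j (T : PowerSeries (ZMod p)) =
      PowerSeries.coeff j W := by
    intro j hj
    rw [Polynomial.coeff_coe, hT, PowerSeries.coeff_trunc, if_pos (by omega)]
  have hA : PowerSeries.coeff m (W ^ p) =
      PowerSeries.coeff m ((T : PowerSeries (ZMod p)) ^ p) := by
    have hdvd := sub_dvd_pow_sub_pow W ((T : PowerSeries (ZMod p))) p
    obtain ⟨c, hc⟩ := hdvd
    have hzero : PowerSeries.coeff m ((W - (T : PowerSeries (ZMod p))) * c) = 0 := by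
      rw [PowerSeries.coeff_mul]
      refine Finset.sum_eq_zero fun x hx => ?_
      have hx' : x.1 + x.2 = m := Finset.HasAntidiagonal.mem_antidiagonal.mp hx
      rw [map_sub, hTc x.1 (by omega), sub_self, zero_mul]
    have h6 := congrArg (PowerSeries.coeff m) hc
    rw [hzero, map_sub, sub_eq_zero] at h6
    exact h6
  have hexp : T ^ p = Polynomial.expand (ZMod p) p T := by
    have h1 := Polynomial.map_frobenius_expand p T
    rw [ZMod.frobenius_zmod, Polynomial.map_id] at h1
    exact h1.symm
  rw [hA, ← Polynomial.coe_pow, hexp, Polynomial.coeff_coe,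
    Polynomial.coeff_expand hp.out.pos, if_pos hm]
  rw [← Polynomial.coeff_coe]
  exact hTc (m / p) (Nat.div_le_self m p)

/-- Frobenius congruence for integral power series over `ℚ_p`. -/
lemma frob_congr (v : PowerSeries ℚ_[p]) (hv : ∀ j, ‖PowerSeries.coeff j v‖ ≤ 1)
    (m : ℕ) (hm : p ∣ m) :
    ‖PowerSeries.coeff m (v ^ p) - PowerSeries.coeff (m / p) v‖ ≤ (p : ℝ)⁻¹ := by
  set V : PowerSeries ℤ_[p] := PowerSeries.mk fun j => ⟨PowerSeries.coeff j v, hv j⟩ with hV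
  have hmap : PowerSeries.map (PadicInt.Coe.ringHom) V = v := by
    ext j
    rw [PowerSeries.coeff_map, hV]
    erw [PowerSeries.coeff_mk]
    rfl
  set x : ℤ_[p] := PowerSeries.coeff m (V ^ p) - PowerSeries.coeff (m / p) V with hx
  have hpow : PowerSeries.map (PadicInt.Coe.ringHom) (V ^ p) = v ^ p := by
    rw [map_pow, hmap]
  have e1 : ((PowerSeries.coeff m (V ^ p) : ℤ_[p]) : ℚ_[p]) =
      PowerSeries.coeff m (v ^ p) := by
    rw [← hpow, PowerSeries.coeff_map]; rfl
  have e2 : ((PowerSeries.coeff (m / p) V : ℤ_[p]) : ℚ_[p]) =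
      PowerSeries.coeff (m / p) v := by
    rw [← hmap, PowerSeries.coeff_map]; rfl
  have hxval : (x : ℚ_[p]) =
      PowerSeries.coeff m (v ^ p) - PowerSeries.coeff (m / p) v := by
    rw [hx, PadicInt.coe_sub, e1, e2]
  have hzero : PadicInt.toZMod x = 0 := by
    rw [hx, map_sub]
    have hpow2 : PowerSeries.map (PadicInt.toZMod) (V ^ p) =
        (PowerSeries.map PadicInt.toZMod V) ^ p := map_pow _ _ _
    have h1 : PadicInt.toZMod (PowerSeries.coeff m (V ^ p)) =
        PowerSeries.coeff m ((PowerSeries.map PadicInt.toZMod V) ^ p) := by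
      rw [← PowerSeries.coeff_map, hpow2]
    have h2 : PadicInt.toZMod (PowerSeries.coeff (m / p) V) =
        PowerSeries.coeff (m / p) (PowerSeries.map PadicInt.toZMod V) := by
      rw [PowerSeries.coeff_map]
    rw [h1, h2, zmod_frobenius_coeff _ m hm, sub_self]
  have hdvd : (p : ℤ_[p]) ∣ x := by
    have hker : x ∈ RingHom.ker (PadicInt.toZMod (p := p)) := hzero
    rw [PadicInt.ker_toZMod, PadicInt.maximalIdeal_eq_span_p, Ideal.mem_span_singleton] at hker
    exact hker
  obtain ⟨y, hy⟩ := hdvd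
  have : ‖x‖ ≤ (p : ℝ)⁻¹ := by
    rw [hy, norm_mul, PadicInt.norm_p]
    calc (p:ℝ)⁻¹ * ‖y‖ ≤ (p:ℝ)⁻¹ * 1 :=
          mul_le_mul_of_nonneg_left y.norm_le_one (by positivity)
      _ = (p:ℝ)⁻¹ := by ring
  rw [← hxval]
  rw [← PadicInt.norm_def]
  exact this

end DworkAux

namespace DworkAux

variable {p : ℕ} [hp : Fact p.Prime]

/-- The coefficients of the solution `u` of `δu = (f - f(0)) u`, `u(0) = 1`. -/
noncomputable def uc (p : ℕ) [Fact p.Prime] (f : PowerSeries ℚ_[p]) : ℕ → ℚ_[p]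
  | 0 => 1
  | (m + 1) => (((m + 1 : ℕ) : ℚ_[p]))⁻¹ *
      ∑ k ∈ Finset.range (m + 1), PowerSeries.coeff (k + 1) f * uc p f (m - k)
  decreasing_by exact Nat.lt_succ_of_le (Nat.sub_le m k)

lemma uc_zero (f : PowerSeries ℚ_[p]) : uc p f 0 = 1 := by rw [uc]

lemma uc_succ (f : PowerSeries ℚ_[p]) (m : ℕ) :
    uc p f (m + 1) = (((m + 1 : ℕ) : ℚ_[p]))⁻¹ *
      ∑ k ∈ Finset.range (m + 1), PowerSeries.coeff (k + 1) f * uc p f (m - k) := by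
  rw [uc]

noncomputable def Useries (p : ℕ) [Fact p.Prime] (f : PowerSeries ℚ_[p]) : PowerSeries ℚ_[p] :=
  PowerSeries.mk (uc p f)

lemma coeff_Useries (f : PowerSeries ℚ_[p]) (m : ℕ) :
    PowerSeries.coeff m (Useries p f) = uc p f m := by
  rw [Useries, PowerSeries.coeff_mk]

lemma delta_Useries (f : PowerSeries ℚ_[p]) :
    seriesDelta (Useries p f) =
      (f - PowerSeries.C (PowerSeries.constantCoeff f)) * Useries p f := by
  set g := f - PowerSeries.C (PowerSeries.constantCoeff f) with hg
  have hg0 : PowerSeries.coeff 0 g = 0 := by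
    simp [hg, PowerSeries.coeff_zero_eq_constantCoeff]
  have hgk : ∀ k : ℕ, PowerSeries.coeff (k + 1) g = PowerSeries.coeff (k + 1) f := by
    intro k
    rw [hg, map_sub, PowerSeries.coeff_C, if_neg (Nat.succ_ne_zero k), sub_zero]
  ext m
  rw [coeff_delta, PowerSeries.coeff_mul, Finset.Nat.sum_antidiagonal_eq_sum_range_succ_mk]
  cases m with
  | zero => simp [hg0]
  | succ m =>
      rw [Finset.sum_range_succ']
      rw [hg0, zero_mul, add_zero]
      have hcast : ((m + 1 : ℕ) : ℚ_[p]) ≠ 0 := Nat.cast_ne_zero.mpr (Nat.succ_ne_zero m)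
      rw [coeff_Useries, uc_succ, ← mul_assoc, mul_inv_cancel₀ hcast, one_mul]
      refine Finset.sum_congr rfl fun k hk => ?_
      rw [hgk k, coeff_Useries]
      congr 2
      omega

section Main

/-- From the hypothesis, `g(t^p) = g(t) + δ(hh)` where `g = f - n0`. -/
lemma subg_eq (f hh : PowerSeries ℚ_[p]) (n0 : ℤ)
    (hres : PowerSeries.constantCoeff f = (n0 : ℚ_[p]))
    (hsub : seriesSub p f - f = seriesDelta hh) :
    seriesSub p (f - PowerSeries.C ((n0 : ℚ_[p]))) =
      (f - PowerSeries.C ((n0 : ℚ_[p]))) + seriesDelta hh := by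
  have hco : ∀ m : ℕ, (if p ∣ m then PowerSeries.coeff (m / p) f else 0)
      - PowerSeries.coeff m f = (m : ℚ_[p]) * PowerSeries.coeff m hh := by
    intro m
    have := congrArg (PowerSeries.coeff m) hsub
    rwa [map_sub, coeff_sub', coeff_delta] at this
  have hgk : ∀ k : ℕ, k ≠ 0 → PowerSeries.coeff k
      (f - PowerSeries.C ((n0 : ℚ_[p]))) = PowerSeries.coeff k f := by
    intro k hk
    rw [map_sub, PowerSeries.coeff_C, if_neg hk, sub_zero]
  have hg0 : PowerSeries.coeff 0
      (f - PowerSeries.C ((n0 : ℚ_[p]))) = 0 := by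
    rw [map_sub, PowerSeries.coeff_C, if_pos rfl, PowerSeries.coeff_zero_eq_constantCoeff,
      hres, sub_self]
  ext m
  rw [coeff_sub', map_add, coeff_delta]
  rcases Nat.eq_zero_or_pos m with rfl | hm
  · rw [if_pos (dvd_zero p), Nat.zero_div, hg0]
    simp
  · rw [hgk m (by omega)]
    by_cases hdvd : p ∣ m
    · have hmp : m / p ≠ 0 := by
        have h1 := Nat.le_of_dvd (by omega) hdvd
        have h2 := Nat.div_pos h1 hp.out.pos
        omega
      rw [if_pos hdvd, hgk (m / p) hmp]
      have h1 := hco m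
      rw [if_pos hdvd] at h1
      linear_combination h1
    · rw [if_neg hdvd]
      have h1 := hco m
      rw [if_neg hdvd, zero_sub] at h1
      linear_combination h1

/-- The key multiplicative identity: `u(t^p) = u(t)^p · E`. -/
lemma key_eq (f hh : PowerSeries ℚ_[p]) (n0 : ℤ)
    (hres : PowerSeries.constantCoeff f = (n0 : ℚ_[p]))
    (hsub : seriesSub p f - f = seriesDelta hh) :
    seriesSub p (Useries p f) = (Useries p f) ^ p * Eser hh := by
  have hg0 : PowerSeries.constantCoeff
      (f - PowerSeries.C ((n0 : ℚ_[p]))) = 0 := by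
    rw [map_sub, PowerSeries.constantCoeff_C, hres, sub_self]
  have hdeltaU : seriesDelta (Useries p f) =
      (f - PowerSeries.C ((n0 : ℚ_[p]))) * Useries p f := by
    rw [delta_Useries, hres]
  have hG0 : PowerSeries.constantCoeff
      (PowerSeries.C ((p : ℚ_[p])) *
        ((f - PowerSeries.C ((n0 : ℚ_[p]))) + seriesDelta hh)) = 0 := by
    rw [map_mul, map_add, hg0, constantCoeff_delta, add_zero, mul_zero]
  refine ode_unique _ _ _ hG0 ?_ ?_ ?_
  · rw [delta_seriesSub, hdeltaU, sub_mul, subg_eq f hh n0 hres hsub]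
    ring
  · have hpne : p ≠ 0 := by have := hp.out.two_le; omega
    have hdpow : seriesDelta ((Useries p f) ^ p) =
        PowerSeries.C ((p : ℚ_[p])) *
          ((f - PowerSeries.C ((n0 : ℚ_[p]))) * (Useries p f) ^ p) := by
      rw [delta_pow' _ hpne, hdeltaU]
      have hUU : (Useries p f) ^ (p - 1) * Useries p f = (Useries p f) ^ p := by
        rw [← pow_succ]
        congr 1
        omega
      calc PowerSeries.C ((p : ℚ_[p])) * ((Useries p f) ^ (p - 1) *
            ((f - PowerSeries.C ((n0 : ℚ_[p]))) * Useries p f))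
          = PowerSeries.C ((p : ℚ_[p])) *
            ((f - PowerSeries.C ((n0 : ℚ_[p]))) *
              ((Useries p f) ^ (p - 1) * Useries p f)) := by ring
        _ = _ := by rw [hUU]
    rw [delta_mul, hdpow, delta_Eser]
    ring
  · have h1 : PowerSeries.coeff 0 (seriesSub p (Useries p f)) = 1 := by
      rw [coeff_sub', if_pos (dvd_zero p), Nat.zero_div, coeff_Useries, uc_zero]
    have h2 : PowerSeries.coeff 0 ((Useries p f) ^ p * Eser hh) = 1 := by
      rw [PowerSeries.coeff_zero_eq_constantCoeff, map_mul, map_pow]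
      have h3 : PowerSeries.constantCoeff (Useries p f) = 1 := by
        rw [← PowerSeries.coeff_zero_eq_constantCoeff, coeff_Useries, uc_zero]
      have h4 : PowerSeries.constantCoeff (Eser hh) = 1 := by
        rw [← PowerSeries.coeff_zero_eq_constantCoeff, coeff_Eser_zero]
      rw [h3, h4, one_pow, one_mul]
    rw [h1, h2]

end Main

end DworkAux

namespace DworkAux

variable {p : ℕ} [hp : Fact p.Prime]

lemma pow_decomp (A w : PowerSeries ℚ_[p]) (q : ℕ) :
    (A + w) ^ (q + 2) = A ^ (q + 2) + A ^ (q + 1) * w * (((q + 2 : ℕ)) : PowerSeries ℚ_[p]) +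
      (∑ k ∈ Finset.range (q + 1),
        A ^ k * w ^ (q + 2 - k) * (((q + 2).choose k : ℕ) : PowerSeries ℚ_[p])) := by
  rw [add_pow, Finset.sum_range_succ, Finset.sum_range_succ]
  rw [Nat.choose_self, Nat.choose_succ_self_right]
  have h1 : q + 2 - (q + 2) = 0 := by omega
  have h2 : q + 2 - (q + 1) = 1 := by omega
  rw [h1, h2]
  push_cast
  ring

theorem uc_norm_le (f hh : PowerSeries ℚ_[p]) (n0 : ℤ)
    (hint : ∀ m : ℕ, ‖PowerSeries.coeff m f‖ ≤ 1)
    (hhint : ∀ m : ℕ, ‖PowerSeries.coeff m hh‖ ≤ 1)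
    (hres : PowerSeries.constantCoeff f = (n0 : ℚ_[p]))
    (hsub : seriesSub p f - f = seriesDelta hh) :
    ∀ m : ℕ, ‖uc p f m‖ ≤ 1 := by
  intro m
  induction m using Nat.strong_induction_on with
  | _ M IH =>
    rcases Nat.eq_zero_or_pos M with rfl | hM
    · rw [uc_zero]; simp
    by_cases hdvd : p ∣ M
    · -- hard case: p ∣ M
      classical
      set ut : PowerSeries ℚ_[p] :=
        PowerSeries.mk (fun j => if j < M then uc p f j else 0) with hut
      set w : PowerSeries ℚ_[p] := Useries p f - ut with hw
      have hut_int : ∀ j, ‖PowerSeries.coeff j ut‖ ≤ 1 := by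
        intro j
        rw [hut, PowerSeries.coeff_mk]
        split_ifs with hj
        · exact IH j hj
        · simp
      have hutpow_int : ∀ j, ‖PowerSeries.coeff j (ut ^ p)‖ ≤ 1 :=
        norm_coeff_pow_le ut hut_int p
      have hw0 : ∀ a, a < M → PowerSeries.coeff a w = 0 := by
        intro a ha
        rw [hw, map_sub, coeff_Useries, hut, PowerSeries.coeff_mk, if_pos ha, sub_self]
      have hwM : PowerSeries.coeff M w = uc p f M := by
        rw [hw, map_sub, coeff_Useries, hut, PowerSeries.coeff_mk, if_neg (by omega), sub_zero]
      have hwX : (X : PowerSeries ℚ_[p]) ^ M ∣ w :=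
        PowerSeries.X_pow_dvd_iff.mpr hw0
      have hutc : PowerSeries.constantCoeff ut = 1 := by
        rw [← PowerSeries.coeff_zero_eq_constantCoeff, hut, PowerSeries.coeff_mk,
          if_pos (by omega), uc_zero]
      obtain ⟨q, hq⟩ : ∃ q, p = q + 2 := ⟨p - 2, by have := hp.out.two_le; omega⟩
      have hUw : ut + w = Useries p f := by rw [hw]; ring
      have hd := pow_decomp ut w q
      rw [← hq] at hd
      rw [hUw] at hd
      -- coefficient facts about U^p
      have hsum0 : ∀ j, j ≤ M → PowerSeries.coeff j
          (∑ k ∈ Finset.range (q + 1),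
            ut ^ k * w ^ (p - k) * (((p.choose k : ℕ)) : PowerSeries ℚ_[p])) = 0 := by
        intro j hj
        rw [map_sum]
        refine Finset.sum_eq_zero fun k hk => ?_
        rw [Finset.mem_range] at hk
        have hpk : p - k = 2 + (p - k - 2) := by omega
        have hdvd2 : (X : PowerSeries ℚ_[p]) ^ (2 * M) ∣
            ut ^ k * w ^ (p - k) * (((p.choose k : ℕ)) : PowerSeries ℚ_[p]) := by
          have h1 : (X : PowerSeries ℚ_[p]) ^ (2 * M) ∣ w ^ 2 := by
            have h2 := pow_dvd_pow_of_dvd hwX 2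
            rwa [← pow_mul, mul_comm M 2] at h2
          have h3 : w ^ 2 ∣ w ^ (p - k) := by
            rw [hpk, pow_add]
            exact Dvd.intro _ rfl
          refine dvd_trans (dvd_trans h1 h3) ?_
          exact Dvd.dvd.mul_right (dvd_mul_left _ _) _
        exact PowerSeries.X_pow_dvd_iff.mp hdvd2 j (by omega)
      have hT2_lt : ∀ j, j < M → PowerSeries.coeff j
          (ut ^ (q + 1) * w * (((p : ℕ)) : PowerSeries ℚ_[p])) = 0 := by
        intro j hj
        have hdvdT : (X : PowerSeries ℚ_[p]) ^ M ∣
            ut ^ (q + 1) * w * (((p : ℕ)) : PowerSeries ℚ_[p]) := by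
          exact Dvd.dvd.mul_right (Dvd.dvd.mul_left hwX _) _
        exact PowerSeries.X_pow_dvd_iff.mp hdvdT j hj
      have hT2_M : PowerSeries.coeff M
          (ut ^ (q + 1) * w * (((p : ℕ)) : PowerSeries ℚ_[p])) = (p : ℚ_[p]) * uc p f M := by
        have hcast : (((p : ℕ)) : PowerSeries ℚ_[p]) = PowerSeries.C ((p : ℚ_[p])) :=
          (map_natCast (PowerSeries.C (R := ℚ_[p])) p).symm
        have harr : ut ^ (q + 1) * w * (((p : ℕ)) : PowerSeries ℚ_[p]) =
            PowerSeries.C ((p : ℚ_[p])) * (ut ^ (q + 1) * w) := by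
          rw [hcast]; ring
        rw [harr, PowerSeries.coeff_C_mul, PowerSeries.coeff_mul]
        have hsingle : ∑ x ∈ Finset.HasAntidiagonal.antidiagonal M,
            PowerSeries.coeff x.1 (ut ^ (q + 1)) * PowerSeries.coeff x.2 w =
            PowerSeries.coeff 0 (ut ^ (q + 1)) * PowerSeries.coeff M w := by
          refine Finset.sum_eq_single_of_mem (0, M) (by simp) fun x hx hne => ?_
          have hx' : x.1 + x.2 = M := Finset.HasAntidiagonal.mem_antidiagonal.mp hx
          have hx2 : x.2 < M := by
            rcases Nat.lt_or_ge x.2 M with h | h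
            · exact h
            · exfalso
              have : x.2 = M := by omega
              have : x = (0, M) := by
                apply Prod.ext <;> simp <;> omega
              exact hne this
          rw [hw0 x.2 hx2, mul_zero]
        rw [hsingle, PowerSeries.coeff_zero_eq_constantCoeff, map_pow, hutc, one_pow, one_mul,
          hwM]
      have hS1 : ∀ j, j < M → PowerSeries.coeff j (Useries p f ^ p) =
          PowerSeries.coeff j (ut ^ p) := by
        intro j hj
        rw [hd, map_add, map_add, hT2_lt j hj, hsum0 j (by omega), add_zero, add_zero]
      have hS1M : PowerSeries.coeff M (Useries p f ^ p) =
          PowerSeries.coeff M (ut ^ p) + (p : ℚ_[p]) * uc p f M := by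
        rw [hd, map_add, map_add, hT2_M, hsum0 M le_rfl, add_zero]
      -- use the key equation
      have hkey := key_eq f hh n0 hres hsub
      have hkeyM := congrArg (PowerSeries.coeff M) hkey
      rw [coeff_sub', if_pos hdvd, coeff_Useries] at hkeyM
      have hdiff : PowerSeries.coeff M (Useries p f ^ p * Eser hh) =
          PowerSeries.coeff M (ut ^ p * Eser hh) + (p : ℚ_[p]) * uc p f M := by
        rw [PowerSeries.coeff_mul, PowerSeries.coeff_mul]
        have hsplit : ∀ x ∈ Finset.HasAntidiagonal.antidiagonal M,
            PowerSeries.coeff x.1 (Useries p f ^ p) * PowerSeries.coeff x.2 (Eser hh) =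
            PowerSeries.coeff x.1 (ut ^ p) * PowerSeries.coeff x.2 (Eser hh) +
              (if x = (M, 0) then (p : ℚ_[p]) * uc p f M else 0) := by
          intro x hx
          have hx' : x.1 + x.2 = M := Finset.HasAntidiagonal.mem_antidiagonal.mp hx
          by_cases hxm : x = (M, 0)
          · rw [hxm, hS1M, coeff_Eser_zero, if_pos rfl]
            ring
          · have hx1 : x.1 < M := by
              rcases Nat.lt_or_ge x.1 M with h | h
              · exact h
              · exfalso
                have h1 : x.1 = M := by omega
                have : x = (M, 0) := by apply Prod.ext <;> simp <;> omega
                exact hxm this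
            rw [hS1 x.1 hx1, if_neg hxm, add_zero]
        rw [Finset.sum_congr rfl hsplit, Finset.sum_add_distrib,
          Finset.sum_ite_eq' (Finset.HasAntidiagonal.antidiagonal M) ((M, 0) : ℕ × ℕ)
            (fun _ => (p : ℚ_[p]) * uc p f M), if_pos (by simp)]
      rw [hdiff] at hkeyM
      -- now: uc (M/p) = coeff M (ut^p * E) + p * uc M
      have hEsplit : PowerSeries.coeff M (ut ^ p * Eser hh) =
          PowerSeries.coeff M (ut ^ p) +
            PowerSeries.coeff M (ut ^ p * (Eser hh - 1)) := by
        have harr : ut ^ p * Eser hh = ut ^ p + ut ^ p * (Eser hh - 1) := by ring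
        rw [harr, map_add]
      rw [hEsplit] at hkeyM
      have hmain : (p : ℚ_[p]) * uc p f M =
          (uc p f (M / p) - PowerSeries.coeff M (ut ^ p)) -
            PowerSeries.coeff M (ut ^ p * (Eser hh - 1)) := by
        linear_combination -hkeyM
      have hpinv_pos : (0:ℝ) < (p : ℝ)⁻¹ := by
        have : (0:ℝ) < p := by exact_mod_cast hp.out.pos
        positivity
      have hna : ‖(p : ℚ_[p]) * uc p f M‖ ≤ (p : ℝ)⁻¹ := by
        rw [hmain, sub_eq_add_neg]
        refine le_trans (Padic.nonarchimedean _ _) (max_le ?_ ?_)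
        · -- ‖uc (M/p) - coeff M (ut^p)‖
          have hMp_lt : M / p < M := Nat.div_lt_self hM hp.out.one_lt
          have hfr := frob_congr ut hut_int M hdvd
          have hutMp : PowerSeries.coeff (M / p) ut = uc p f (M / p) := by
            rw [hut, PowerSeries.coeff_mk, if_pos hMp_lt]
          rw [hutMp] at hfr
          calc ‖uc p f (M / p) - PowerSeries.coeff M (ut ^ p)‖
              = ‖PowerSeries.coeff M (ut ^ p) - uc p f (M / p)‖ := by
                rw [← norm_neg]; congr 1; ring
            _ ≤ (p : ℝ)⁻¹ := hfr
        · rw [norm_neg]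
          have := norm_coeff_mul_le (ut ^ p) (Eser hh - 1) zero_le_one (le_of_lt hpinv_pos)
            hutpow_int (norm_coeff_Eser_sub_one hh hhint) M
          calc ‖PowerSeries.coeff M (ut ^ p * (Eser hh - 1))‖ ≤ 1 * (p : ℝ)⁻¹ := this
            _ = (p : ℝ)⁻¹ := by ring
      rw [norm_mul, Padic.norm_p] at hna
      have hppos : (0:ℝ) < (p : ℝ) := by exact_mod_cast hp.out.pos
      calc ‖uc p f M‖ = (p : ℝ) * ((p : ℝ)⁻¹ * ‖uc p f M‖) := by
            rw [← mul_assoc, mul_inv_cancel₀ (ne_of_gt hppos), one_mul]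
        _ ≤ (p : ℝ) * (p : ℝ)⁻¹ := mul_le_mul_of_nonneg_left hna hppos.le
        _ = 1 := mul_inv_cancel₀ (ne_of_gt hppos)
    · -- easy case: ¬ p ∣ M
      obtain ⟨m, rfl⟩ : ∃ m, M = m + 1 := ⟨M - 1, by omega⟩
      rw [uc_succ, norm_mul]
      have hnorm1 : ‖(((m + 1 : ℕ)) : ℚ_[p])‖ = 1 := by
        refine le_antisymm ?_ ?_
        · exact_mod_cast Padic.norm_int_le_one ((m + 1 : ℕ) : ℤ)
        · by_contra hlt
          push_neg at hlt
          have h2 : ‖(((m + 1 : ℕ) : ℤ) : ℚ_[p])‖ < 1 := by exact_mod_cast hlt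
          rw [Padic.norm_intCast_lt_one_iff] at h2
          exact hdvd (by exact_mod_cast h2)
      rw [norm_inv, hnorm1, inv_one, one_mul]
      refine norm_sum_le _ _ zero_le_one fun k hk => ?_
      rw [norm_mul]
      rw [Finset.mem_range] at hk
      calc ‖PowerSeries.coeff (k + 1) f‖ * ‖uc p f (m - k)‖ ≤ 1 * 1 :=
            mul_le_mul (hint (k + 1)) (IH (m - k) (by omega)) (norm_nonneg _) zero_le_one
        _ = 1 := by ring

end DworkAux

/-- Dwork's Lemma, converse direction.  Let `ω = f dt/t` with `f ∈ ℤ_p[[t]]` whose residue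
`f(0)` is an integer `n₀`.  If `(1/p)ω(t^p) − ω(t) = dh` for some `h ∈ ℤ_p[[t]]`
(equivalently `f(t^p) − f(t) = δ(h)`), then `ω = dlog q` for some `q ∈ ℤ_p((t))^*`:
there is `u ∈ 1 + t ℤ_p[[t]]` with `δ(u) = (f − n₀) u`, i.e. `q = c t^{n₀} u` satisfies
`t q'/q = f`. -/
theorem stmt3 (p : ℕ) [Fact p.Prime] (f : PowerSeries ℚ_[p]) (n0 : ℤ)
    (hint : ∀ m : ℕ, ‖PowerSeries.coeff m f‖ ≤ 1)
    (hres : PowerSeries.constantCoeff f = (n0 : ℚ_[p]))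
    (h : ∃ hh : PowerSeries ℚ_[p], (∀ m : ℕ, ‖PowerSeries.coeff m hh‖ ≤ 1) ∧
      seriesSub p f - f = seriesDelta hh) :
    ∃ u : PowerSeries ℚ_[p], PowerSeries.constantCoeff u = 1 ∧
      (∀ m : ℕ, ‖PowerSeries.coeff m u‖ ≤ 1) ∧
      seriesDelta u = (f - (n0 : PowerSeries ℚ_[p])) * u := by
  obtain ⟨hh, hhint, hsub⟩ := h
  refine ⟨DworkAux.Useries p f, ?_, ?_, ?_⟩
  · rw [← PowerSeries.coeff_zero_eq_constantCoeff, DworkAux.coeff_Useries, DworkAux.uc_zero]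
  · intro m
    rw [DworkAux.coeff_Useries]
    exact DworkAux.uc_norm_le f hh n0 hint hhint hres hsub m
  · have hcast : ((n0 : ℤ) : PowerSeries ℚ_[p]) = PowerSeries.C ((n0 : ℚ_[p])) :=
      (map_intCast (PowerSeries.C (R := ℚ_[p])) n0).symm
    rw [hcast, DworkAux.delta_Useries, hres]
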